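/- Let a : ℕ → ℝ, let m ≥ 1 be an integer, η > 0, and K ≥ max(m − 1, 1) an integer. Suppose that for every k ≥ K, a(k+1) ≤ max{ a(k), a(k−1), …, a(k−m+1) } − η/k. Then a is not bounded below; in fact inf_k a(k) = −∞. -/
import Mathlib


/-- If a real sequence `a` satisfies, for all `k ≥ K` (where
`K ≥ max (m-1) 1` and `m ≥ 1`), `a (k+1) ≤ max {a k, a (k-1), …, a (k-m+1)} - η/k`
with `η > 0`, then `a` is not bounded below. -/
theorem not_bddBelow_of_sufficient_decrease (a : ℕ → ℝ) (m : ℕ) (hm : 1 ≤ m)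
    (η : ℝ) (hη : 0 < η) (K : ℕ) (hK : max (m - 1) 1 ≤ K)
    (hrec : ∀ k, K ≤ k →
      a (k + 1) ≤ (Finset.range m).sup'
          (Finset.nonempty_range_iff.mpr (by omega)) (fun j => a (k - j))
        - η / (k : ℝ)) :
    ¬ BddBelow (Set.range a) := by
  have hne : (Finset.range m).Nonempty := Finset.nonempty_range_iff.mpr (by omega)
  set M : ℕ → ℝ := fun k => (Finset.range m).sup' hne (fun j => a (k - j)) with hM
  have hK1 : 1 ≤ K := le_trans (le_max_right _ _) hK
  have hrec' : ∀ k, K ≤ k → a (k + 1) ≤ M k - η / (k : ℝ) := fun k hk => hrec k hk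
  intro hb
  obtain ⟨c, hc⟩ := hb
  have hca : ∀ n, c ≤ a n := fun n => hc (Set.mem_range_self n)
  have hstep : ∀ k, K ≤ k → M (k + 1) ≤ M k := by
    intro k hk
    apply Finset.sup'_le
    intro j hj
    rcases Nat.eq_zero_or_pos j with h0 | h1
    · subst h0
      have hdiv : 0 ≤ η / (k : ℝ) := div_nonneg hη.le (by positivity)
      have := hrec' k hk
      simp only [Nat.sub_zero]
      linarith
    · have hj' : j - 1 ∈ Finset.range m := by
        simp only [Finset.mem_range] at hj ⊢; omega
      have heq : k + 1 - j = k - (j - 1) := by omega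
      rw [heq]
      exact Finset.le_sup' (fun j => a (k - j)) hj'
  have hmono : ∀ k, K ≤ k → ∀ l, k ≤ l → M l ≤ M k := by
    intro k hk l hl
    induction l, hl using Nat.le_induction with
    | base => exact le_refl _
    | succ n hn ih => exact le_trans (hstep n (le_trans hk hn)) ih
  have hdrop : ∀ k, K ≤ k → M (k + m) ≤ M k - η / ((k : ℝ) + m) := by
    intro k hk
    apply Finset.sup'_le
    intro j hj
    simp only [Finset.mem_range] at hj
    have hi : k + m - j = (k + m - 1 - j) + 1 := by omega
    set i := k + m - 1 - j with hidef
    have hik : K ≤ i := by omega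
    rw [hi]
    have h1 : a (i + 1) ≤ M i - η / (i : ℝ) := hrec' i hik
    have h2 : M i ≤ M k := hmono k hk i (by omega)
    have h3 : η / ((k : ℝ) + m) ≤ η / (i : ℝ) := by
      apply div_le_div_of_nonneg_left hη.le
      · have : (1 : ℕ) ≤ i := le_trans hK1 hik
        exact_mod_cast Nat.lt_of_lt_of_le Nat.zero_lt_one this
      · have : i ≤ k + m := by omega
        exact_mod_cast Nat.cast_le.mpr this
    linarith
  have hiter : ∀ t, M (K + t * m) ≤
      M K - η * ∑ s ∈ Finset.range t, 1 / ((K : ℝ) + ((s : ℝ) + 1) * m) := by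
    intro t
    induction t with
    | zero => simp
    | succ t ih =>
      have heq : K + (t + 1) * m = (K + t * m) + m := by ring
      rw [heq, Finset.sum_range_succ]
      have hd := hdrop (K + t * m) (Nat.le_add_right _ _)
      have hle : M (K + t * m + m) ≤ M (K + t * m) - η / ((K : ℝ) + ((t : ℝ) + 1) * m) := by
        have hcast : ((↑(K + t * m) : ℝ) + m) = (K : ℝ) + ((t : ℝ) + 1) * m := by
          push_cast; ring
        rw [← hcast]; exact hd
      have : η * (1 / ((K : ℝ) + ((t : ℝ) + 1) * m)) = η / ((K : ℝ) + ((t : ℝ) + 1) * m) := by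
        rw [mul_one_div]
      linarith
  -- termwise comparison with harmonic series
  have hKm : (0 : ℝ) < (K : ℝ) + m := by positivity
  have hterm : ∀ s : ℕ, (1 : ℝ) / (((K : ℝ) + m) * ((s : ℝ) + 1)) ≤
      1 / ((K : ℝ) + ((s : ℝ) + 1) * m) := by
    intro s
    apply one_div_le_one_div_of_le
    · have hs : (0 : ℝ) ≤ (s : ℝ) := Nat.cast_nonneg s
      have hm' : (1 : ℝ) ≤ (m : ℝ) := by exact_mod_cast hm
      have hK' : (1 : ℝ) ≤ (K : ℝ) := by exact_mod_cast hK1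
      nlinarith
    · have hs : (0 : ℝ) ≤ (s : ℝ) := Nat.cast_nonneg s
      have hK' : (1 : ℝ) ≤ (K : ℝ) := by exact_mod_cast hK1
      have hm' : (0 : ℝ) ≤ (m : ℝ) := Nat.cast_nonneg m
      nlinarith
  have hsumle : ∀ t, (1 / ((K : ℝ) + m)) * ∑ s ∈ Finset.range t, (1 : ℝ) / ((s : ℝ) + 1) ≤
      ∑ s ∈ Finset.range t, 1 / ((K : ℝ) + ((s : ℝ) + 1) * m) := by
    intro t
    rw [Finset.mul_sum]
    apply Finset.sum_le_sum
    intro s _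
    simpa [mul_one_div, div_div, mul_comm] using hterm s
  -- harmonic divergence
  have hharm : Filter.Tendsto (fun t => ∑ s ∈ Finset.range t, (1 : ℝ) / ((s : ℝ) + 1))
      Filter.atTop Filter.atTop := by
    exact Real.tendsto_sum_range_one_div_nat_succ_atTop
  set B : ℝ := (M K - c + 1) * ((K : ℝ) + m) / η with hB
  obtain ⟨t, ht⟩ := (Filter.tendsto_atTop.mp hharm B).exists
  have hS := hsumle t
  have hIt := hiter t
  have hlow : c ≤ M (K + t * m) := le_trans (hca (K + t * m)) (by
    have h0 : (0 : ℕ) ∈ Finset.range m := Finset.mem_range.mpr (by omega)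
    have h := Finset.le_sup' (fun j => a (K + t * m - j)) h0
    simp only [Nat.sub_zero] at h
    exact h)
  -- derive contradiction
  have hBsum : B ≤ ∑ s ∈ Finset.range t, (1 : ℝ) / ((s : ℝ) + 1) := ht
  have hηK : 0 < η / ((K : ℝ) + m) := div_pos hη hKm
  have key : M K - c + 1 ≤ η * ∑ s ∈ Finset.range t, 1 / ((K : ℝ) + ((s : ℝ) + 1) * m) := by
    have h1 : (M K - c + 1) ≤ η / ((K : ℝ) + m) * ∑ s ∈ Finset.range t, (1 : ℝ) / ((s : ℝ) + 1) := by
      rw [div_mul_eq_mul_div, le_div_iff₀ hKm]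
      calc (M K - c + 1) * ((K : ℝ) + m) = B * η := by rw [hB]; field_simp
        _ ≤ (∑ s ∈ Finset.range t, (1 : ℝ) / ((s : ℝ) + 1)) * η := by
            exact mul_le_mul_of_nonneg_right hBsum hη.le
        _ = η * ∑ s ∈ Finset.range t, (1 : ℝ) / ((s : ℝ) + 1) := by ring
    calc M K - c + 1 ≤ η / ((K : ℝ) + m) * ∑ s ∈ Finset.range t, (1 : ℝ) / ((s : ℝ) + 1) := h1
      _ = η * ((1 / ((K : ℝ) + m)) * ∑ s ∈ Finset.range t, (1 : ℝ) / ((s : ℝ) + 1)) := by ring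
      _ ≤ η * ∑ s ∈ Finset.range t, 1 / ((K : ℝ) + ((s : ℝ) + 1) * m) :=
          mul_le_mul_of_nonneg_left hS hη.le
  linarith
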